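/- arXiv:2001.11333 — 3 statements merged into one kernel-verified Lean document; each statement's English description precedes it below -/
import Mathlib

section
/- The waiting-time law of the Geo/Geo/1 queue is a probability distribution: with W⁰ = (d−α)/d and Wᵐ = Σ_{v=1}^{m} x_v·C(m−1, v−1)·d^v·(1−d)^{m−v} for m ≥ 1, one has Σ_{m=0}^{∞} Wᵐ = 1; in particular Σ_{m=1}^{∞} Wᵐ = α/d. -/
/-- The waiting-time law of the Geo/Geo/1 queue is a probability distribution:
`∑_{m=0}^∞ W m = 1`, and in particular `∑_{m=1}^∞ W m = α/d`. -/
theorem geo_geo_one_waiting_time_prob (α d : ℝ) (hα : 0 < α) (hαd : α < d) (hd : d < 1)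
    (R : ℝ) (hR : R = α * (1 - d) / ((1 - α) * d))
    (x : ℕ → ℝ) (hx0 : x 0 = (d - α) / d)
    (hx : ∀ i : ℕ, 1 ≤ i → x i = R ^ i * x 0 / (1 - d))
    (W : ℕ → ℝ) (hW0 : W 0 = (d - α) / d)
    (hW : ∀ m : ℕ, 1 ≤ m →
      W m = ∑ v ∈ Finset.Icc 1 m,
        x v * ((m - 1).choose (v - 1) : ℝ) * d ^ v * (1 - d) ^ (m - v)) :
    (∑' m : ℕ, W m) = 1 ∧ (∑' m : ℕ, W (m + 1)) = α / d := by
  have hd0 : (0:ℝ) < d := lt_trans hα hαd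
  have h1d : (0:ℝ) < 1 - d := by linarith
  have h1a : (0:ℝ) < 1 - α := by linarith
  set q : ℝ := (1 - d) / (1 - α) with hq
  set c : ℝ := (d - α) * α / (d * (1 - α)) with hc
  have hq0 : 0 ≤ q := le_of_lt (div_pos h1d h1a)
  have hq1 : q < 1 := by
    rw [hq, div_lt_one h1a]; linarith
  have key : ∀ m : ℕ, W (m + 1) = c * q ^ m := by
    intro m
    rw [hW (m + 1) (by omega), ← Finset.Ico_add_one_right_eq_Icc, Finset.sum_Ico_eq_sum_range]
    simp only [Nat.succ_sub_one, Nat.add_sub_cancel]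
    have step1 : ∀ u ∈ Finset.range (m + 1),
        x (1 + u) * (m.choose (1 + u - 1) : ℝ) * d ^ (1 + u) *
          (1 - d) ^ (m + 1 - (1 + u))
        = (x 0 * R * d / (1 - d)) *
          ((R * d) ^ u * (1 - d) ^ (m - u) * (m.choose u : ℝ)) := by
      intro u hu
      have e1 : 1 + u - 1 = u := by omega
      have e3 : m + 1 - (1 + u) = m - u := by omega
      rw [e1, e3, hx (1 + u) (by omega)]
      rw [pow_add, pow_add, mul_pow]
      ring
    rw [Finset.sum_congr rfl step1, ← Finset.mul_sum, ← add_pow]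
    have hRd : R * d + (1 - d) = q := by
      rw [hR, hq]
      field_simp
      ring
    have hcoef : x 0 * R * d / (1 - d) = c := by
      rw [hx0, hR, hc]
      field_simp
    rw [hRd, hcoef]
  have hsum_geo : Summable (fun m : ℕ => c * q ^ m) :=
    (summable_geometric_of_lt_one hq0 hq1).mul_left c
  have hsum_shift : Summable (fun m : ℕ => W (m + 1)) := by
    exact hsum_geo.congr (fun m => (key m).symm)
  have hsumW : Summable W := (summable_nat_add_iff 1).mp hsum_shift
  have h2 : (∑' m : ℕ, W (m + 1)) = α / d := by
    rw [tsum_congr key, tsum_mul_left, tsum_geometric_of_lt_one hq0 hq1]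
    have h1q : 1 - q = (d - α) / (1 - α) := by
      rw [hq]; field_simp; ring
    have hdne : d ≠ 0 := ne_of_gt hd0
    have h1ane : (1 - α) ≠ 0 := ne_of_gt h1a
    have hdane : d - α ≠ 0 := ne_of_gt (by linarith)
    rw [hc, h1q, inv_div]
    field_simp
  refine ⟨?_, h2⟩
  rw [Summable.tsum_eq_zero_add hsumW, h2, hW0]
  field_simp
  ring
end

section
/- The mean waiting time of a packet in the Geo/Geo/1 queue has the closed form Σ_{m=0}^{∞} m·Wᵐ = α(1−α)/(d(d−α)). -/
/-- Mean waiting time of a packet in the Geo/Geo/1 queue: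
`∑_{m=0}^∞ m * W m = α(1-α)/(d(d-α))`. -/
theorem geo_geo_one_mean_waiting_time (α d : ℝ) (hα : 0 < α) (hαd : α < d) (hd : d < 1)
    (R : ℝ) (hR : R = α * (1 - d) / ((1 - α) * d))
    (x : ℕ → ℝ) (hx0 : x 0 = (d - α) / d)
    (hx : ∀ i : ℕ, 1 ≤ i → x i = R ^ i * x 0 / (1 - d))
    (W : ℕ → ℝ) (hW0 : W 0 = (d - α) / d)
    (hW : ∀ m : ℕ, 1 ≤ m →
      W m = ∑ v ∈ Finset.Icc 1 m,
        x v * ((m - 1).choose (v - 1) : ℝ) * d ^ v * (1 - d) ^ (m - v)) :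
    (∑' m : ℕ, (m : ℝ) * W m) = α * (1 - α) / (d * (d - α)) := by
  have hd0 : (0:ℝ) < d := hα.trans hαd
  have h1α : (0:ℝ) < 1 - α := by linarith
  have h1d : (0:ℝ) < 1 - d := by linarith
  set q : ℝ := (1 - d) / (1 - α) with hq
  set c : ℝ := α * (d - α) / (d * (1 - α)) with hc
  have hq0 : 0 < q := div_pos h1d h1α
  have hq1 : q < 1 := (div_lt_one h1α).mpr (by linarith)
  have hWn : ∀ n : ℕ, W (n + 1) = c * q ^ n := by
    intro n
    rw [hW (n + 1) (by omega), ← Finset.Ico_add_one_right_eq_Icc, Finset.sum_Ico_eq_sum_range]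
    have hsum : ∀ i ∈ Finset.range (n + 1 + 1 - 1),
        x (1 + i) * ((n + 1 - 1).choose (1 + i - 1) : ℝ) * d ^ (1 + i) *
          (1 - d) ^ (n + 1 - (1 + i))
        = (x 0 * R * d / (1 - d)) *
            ((R * d) ^ i * (1 - d) ^ (n - i) * (n.choose i : ℝ)) := by
      intro i hi
      simp only [Finset.mem_range] at hi
      have h1 : n + 1 - (1 + i) = n - i := by omega
      have h2 : n + 1 - 1 = n := by omega
      have h3 : 1 + i - 1 = i := by omega
      rw [hx (1 + i) (by omega), h1, h2, h3, mul_pow, pow_add, pow_add]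
      field_simp
    rw [Finset.sum_congr rfl hsum, ← Finset.mul_sum]
    have hrange : n + 1 + 1 - 1 = n + 1 := by omega
    rw [hrange, ← add_pow]
    have hRd : R * d + (1 - d) = q := by
      rw [hR, hq]
      field_simp
      ring
    have hcoef : x 0 * R * d / (1 - d) = c := by
      rw [hx0, hR, hc]
      field_simp
    rw [hRd, hcoef]
  have hfun : ∀ m : ℕ, (m : ℝ) * W m = (c / q) * ((m : ℝ) * q ^ m) := by
    intro m
    cases m with
    | zero => simp
    | succ n =>
      rw [hWn n, pow_succ]
      field_simp
  calc (∑' m : ℕ, (m : ℝ) * W m)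
      = ∑' m : ℕ, (c / q) * ((m : ℝ) * q ^ m) := tsum_congr hfun
    _ = (c / q) * ∑' m : ℕ, (m : ℝ) * q ^ m := tsum_mul_left
    _ = (c / q) * (q / (1 - q) ^ 2) := by
        rw [tsum_coe_mul_geometric_of_norm_lt_one
          (by rwa [Real.norm_eq_abs, abs_of_pos hq0])]
    _ = α * (1 - α) / (d * (d - α)) := by
        rw [hc, hq]
        have hdα : (0:ℝ) < d - α := by linarith
        have h1 : (1:ℝ) - (1 - d) / (1 - α) = (d - α) / (1 - α) := by
          field_simp
          ring
        rw [h1]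
        field_simp
end

section
/- Per-class peak age of information: for a device of a QoS class with service (transmission success) probability d satisfying α < d < 1, the mean peak AoI, equal to the mean inter-arrival time 1/α plus the mean waiting time Σ_{m} m·Wᵐ, equals 1/α + α(1−α)/(d(d−α)). -/
/-- Per-class peak age of information of the Geo/Geo/1 queue: the mean peak AoI,
equal to the mean inter-arrival time `1/α` plus the mean waiting time
`∑_m m * W m`, equals `1/α + α(1-α)/(d(d-α))`. -/
theorem geo_geo_one_peak_aoi (α d : ℝ) (hα : 0 < α) (hαd : α < d) (hd : d < 1)
    (R : ℝ) (hR : R = α * (1 - d) / ((1 - α) * d))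
    (x : ℕ → ℝ) (hx0 : x 0 = (d - α) / d)
    (hx : ∀ i : ℕ, 1 ≤ i → x i = R ^ i * x 0 / (1 - d))
    (W : ℕ → ℝ) (hW0 : W 0 = (d - α) / d)
    (hW : ∀ m : ℕ, 1 ≤ m →
      W m = ∑ v ∈ Finset.Icc 1 m,
        x v * ((m - 1).choose (v - 1) : ℝ) * d ^ v * (1 - d) ^ (m - v)) :
    1 / α + (∑' m : ℕ, (m : ℝ) * W m) = 1 / α + α * (1 - α) / (d * (d - α)) := by
  have hd0 : 0 < d := hα.trans hαd
  have h1d : 0 < 1 - d := by linarith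
  have h1α : 0 < 1 - α := by linarith
  have hdα : 0 < d - α := by linarith
  set q : ℝ := (1 - d) / (1 - α) with hq
  set C : ℝ := α * (d - α) / ((1 - α) * d) with hC
  have hq0 : 0 < q := div_pos h1d h1α
  have hq1 : q < 1 := by rw [hq, div_lt_one h1α]; linarith
  have hsum : R * d + (1 - d) = q := by
    rw [hR, hq]; field_simp; ring
  have hcoef : x 0 * (R * d) / (1 - d) = C := by
    rw [hx0, hR, hC]; field_simp
  have hWm : ∀ m : ℕ, 1 ≤ m → W m = C * q ^ (m - 1) := by
    intro m hm
    obtain ⟨n, rfl⟩ : ∃ n, m = n + 1 := ⟨m - 1, by omega⟩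
    rw [hW _ (by omega), ← Finset.Ico_add_one_right_eq_Icc, Finset.sum_Ico_eq_sum_range]
    have hb : n + 1 + 1 - 1 = n + 1 := by omega
    rw [hb]
    have hterm : ∀ i ∈ Finset.range (n + 1),
        x (1 + i) * ((n + 1 - 1).choose (1 + i - 1) : ℝ) * d ^ (1 + i) *
          (1 - d) ^ (n + 1 - (1 + i))
        = (x 0 * (R * d) / (1 - d)) *
            ((R * d) ^ i * (1 - d) ^ (n - i) * (n.choose i : ℝ)) := by
      intro i hi
      simp only [Finset.mem_range] at hi
      have h1 : (1 : ℕ) + i - 1 = i := by omega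
      have h2 : n + 1 - 1 = n := by omega
      have h3 : n + 1 - (1 + i) = n - i := by omega
      rw [hx (1 + i) (by omega), h1, h2, h3]
      field_simp
      ring
    rw [Finset.sum_congr rfl hterm, ← Finset.mul_sum, ← add_pow, hsum, hcoef]
    norm_num
  have hf : ∀ m : ℕ, (m : ℝ) * W m = C * (((m : ℝ) * q ^ m) * q⁻¹) := by
    intro m
    cases m with
    | zero => simp
    | succ n =>
        rw [hWm (n + 1) (by omega)]
        have h1 : n + 1 - 1 = n := rfl
        rw [h1, pow_succ]
        have hqne : q ≠ 0 := hq0.ne'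
        field_simp
  have hnorm : ‖q‖ < 1 := by rw [Real.norm_eq_abs, abs_of_pos hq0]; exact hq1
  have hts : (∑' m : ℕ, (m : ℝ) * W m) = C * ((q / (1 - q) ^ 2) * q⁻¹) := by
    rw [tsum_congr hf, tsum_mul_left, tsum_mul_right,
      tsum_coe_mul_geometric_of_norm_lt_one hnorm]
  rw [hts, hC, hq]
  have h1 : (1 : ℝ) - (1 - d) / (1 - α) = (d - α) / (1 - α) := by
    field_simp
    ring
  rw [h1]
  field_simp
end
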